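/- Let $\sigma \subseteq N(z_1\cdots z_n)$ be a critical cell (with $z_k = 1$, $\tau$ its set of injective maps). If $X_\sigma = [m]$, then $A_i^\sigma = \{z_i\}$ for every $i \in [n]$, and hence $\sigma \cup \langle z_i \rangle$ is not a simplex of $\mathcal{N}(G)$ for any $i$. -/

import Mathlib

/-- Adjacency in the exponential graph `K_m^{K_n}`. -/
def ExpAdj (n m : ℕ) (f g : Fin n → Fin m) : Prop :=
  ∀ i j : Fin n, i ≠ j → f i ≠ g j

/-- Vertices of the fold `G` of `K_m^{K_n}`: constant maps and injective maps. -/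
def GVert (n m : ℕ) (f : Fin n → Fin m) : Prop :=
  (∃ x, ∀ i, f i = x) ∨ Function.Injective f

/-- The constant map `⟨k+1⟩` (colors `1,…,m` are represented by `0,…,m-1`). -/
def cst (n m : ℕ) [NeZero m] (k : ℕ) : Fin n → Fin m := fun _ => (Fin.ofNat m k : Fin m)

/-- Nonempty faces of the neighborhood complex `𝒩(G)` of the fold `G`. -/
def NFaceG (n m : ℕ) (σ : Finset (Fin n → Fin m)) : Prop :=
  (∀ f ∈ σ, GVert n m f) ∧ ∃ h, GVert n m h ∧ ∀ f ∈ σ, ExpAdj n m f h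

/-- `Sp n m k` is the set `S'_{k}` of the paper (with `S'_0` the full face poset
of `𝒩(G)`): the faces still unmatched after matching with the constant maps
`⟨1⟩, …, ⟨k⟩`. -/
def Sp (n m : ℕ) [NeZero m] : ℕ → Set (Finset (Fin n → Fin m))
  | 0 => {σ | σ.Nonempty ∧ NFaceG n m σ}
  | k + 1 =>
      Sp n m k \
        ({σ | σ ∈ Sp n m k ∧ cst n m k ∉ σ ∧ insert (cst n m k) σ ∈ Sp n m k} ∪
          (insert (cst n m k)) ''
            {σ | σ ∈ Sp n m k ∧ cst n m k ∉ σ ∧ insert (cst n m k) σ ∈ Sp n m k})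

/-- `MSet n m k` is the set `S_{k+1}` of the paper: the faces matched (by adding
the constant map `⟨k+1⟩`) at stage `k+1`. -/
def MSet (n m : ℕ) [NeZero m] (k : ℕ) : Set (Finset (Fin n → Fin m)) :=
  {σ | σ ∈ Sp n m k ∧ cst n m k ∉ σ ∧ insert (cst n m k) σ ∈ Sp n m k}

/-- A face of `𝒩(G)` is critical when it is unmatched by the matching `μ`. -/
def Critical (n m : ℕ) [NeZero m] (σ : Finset (Fin n → Fin m)) : Prop :=
  σ ∈ Sp n m 0 ∧ ∀ k < m, σ ∉ MSet n m k ∧ ¬ ∃ τ ∈ MSet n m k, σ = insert (cst n m k) τ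

/-- `X_i^σ = {f i : f ∈ σ}`. -/
def Xi (n m : ℕ) (σ : Finset (Fin n → Fin m)) (i : Fin n) : Finset (Fin m) :=
  σ.image (fun f => f i)

/-- `X_σ = ⋃ᵢ X_i^σ`. -/
def Xall (n m : ℕ) (σ : Finset (Fin n → Fin m)) : Finset (Fin m) :=
  Finset.univ.biUnion (fun i => Xi n m σ i)

/-- `A_i^σ = [m] \ ⋃_{j ≠ i} X_j^σ`. -/
def Ai (n m : ℕ) (σ : Finset (Fin n → Fin m)) (i : Fin n) : Finset (Fin m) :=
  Finset.univ \ (Finset.univ.erase i).biUnion (fun j => Xi n m σ j)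

/- ### Auxiliary lemmas -/

lemma aux_sp_succ_subset (n m : ℕ) [NeZero m] (k : ℕ) : Sp n m (k+1) ⊆ Sp n m k :=
  Set.diff_subset

lemma aux_face_mono (n m : ℕ) [NeZero m] {δ γ : Finset (Fin n → Fin m)} (hγ : γ ∈ Sp n m 0)
    (hsub : δ ⊆ γ) (hne : δ.Nonempty) : δ ∈ Sp n m 0 := by
  obtain ⟨-, hv, h, hgv, hadj⟩ := hγ
  exact ⟨hne, fun f hf => hv f (hsub hf), h, hgv, fun f hf => hadj f (hsub hf)⟩

lemma aux_mem_sp_succ_iff (n m : ℕ) [NeZero m] (k : ℕ) (δ : Finset (Fin n → Fin m)) :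
    δ ∈ Sp n m (k+1) ↔ δ ∈ Sp n m k ∧
      ((cst n m k ∈ δ ∧ δ.erase (cst n m k) ∉ Sp n m k) ∨
       (cst n m k ∉ δ ∧ insert (cst n m k) δ ∉ Sp n m k)) := by
  constructor
  · rintro ⟨hδ, hnot⟩
    refine ⟨hδ, ?_⟩
    by_cases hc : cst n m k ∈ δ
    · refine Or.inl ⟨hc, fun her => hnot (Or.inr ⟨δ.erase (cst n m k),
        ⟨her, Finset.notMem_erase _ _, by rwa [Finset.insert_erase hc]⟩,
        Finset.insert_erase hc⟩)⟩
    · exact Or.inr ⟨hc, fun hins => hnot (Or.inl ⟨hδ, hc, hins⟩)⟩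
  · rintro ⟨hδ, hor⟩
    refine ⟨hδ, ?_⟩
    rintro (⟨-, hc, hins⟩ | ⟨ρ, ⟨hρ, hcρ, hinsρ⟩, heq⟩)
    · rcases hor with ⟨hc', -⟩ | ⟨-, hins'⟩
      · exact hc hc'
      · exact hins' hins
    · rcases hor with ⟨-, her⟩ | ⟨hc', -⟩
      · apply her
        have hρδ : ρ = δ.erase (cst n m k) := by
          rw [← heq, Finset.erase_insert hcρ]
        rwa [hρδ] at hρ
      · exact hc' (heq ▸ Finset.mem_insert_self _ _)

lemma aux_crit_sp (n m : ℕ) [NeZero m] (σ : Finset (Fin n → Fin m))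
    (hcrit : Critical n m σ) : ∀ l, l ≤ m → σ ∈ Sp n m l := by
  intro l
  induction l with
  | zero => exact fun _ => hcrit.1
  | succ l ih =>
    intro hl
    have hlm : l < m := hl
    refine ⟨ih (le_of_lt hlm), ?_⟩
    rintro (hm | ⟨ρ, hρ, heq⟩)
    · exact (hcrit.2 l hlm).1 hm
    · exact (hcrit.2 l hlm).2 ⟨ρ, hρ, heq.symm⟩

lemma aux_toggle (n m : ℕ) [NeZero m] (hn1 : 1 ≤ n) (w : Fin m)
    (P : Finset (Fin n → Fin m) → Prop)
    (P1 : ∀ ρ, P ρ → ρ.Nonempty)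
    (P3 : ∀ ρ (j : ℕ), j < w.val → P ρ → P (insert (cst n m j) ρ))
    (P4 : ∀ ρ (j : ℕ), j < w.val → P ρ → P (ρ.erase (cst n m j)))
    (P5 : ∀ ρ, P ρ → ρ ∈ Sp n m 0 → insert (fun _ => w : Fin n → Fin m) ρ ∈ Sp n m 0) :
    ∀ l, l ≤ w.val → ∀ ρ, P ρ →
      (ρ ∈ Sp n m l ↔ insert (fun _ => w : Fin n → Fin m) ρ ∈ Sp n m l) := by
  intro l
  induction l with
  | zero =>
    intro _ ρ hP
    exact ⟨fun h => P5 ρ hP h,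
      fun h => aux_face_mono n m h (Finset.subset_insert _ _) (P1 ρ hP)⟩
  | succ l ih =>
    intro hl ρ hP
    have hllt : l < w.val := hl
    have hl' : l ≤ w.val := le_of_lt hllt
    have hcw : cst n m l ≠ (fun _ => w : Fin n → Fin m) := by
      intro hEq
      have h1 : (Fin.ofNat m l) = w := congrFun hEq ⟨0, hn1⟩
      have h2 : (Fin.ofNat m l).val = w.val := congrArg Fin.val h1
      rw [Fin.val_ofNat, Nat.mod_eq_of_lt (lt_trans hllt w.isLt)] at h2
      omega
    have e1 : cst n m l ∈ insert (fun _ => w : Fin n → Fin m) ρ ↔ cst n m l ∈ ρ := by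
      simp [Finset.mem_insert, hcw]
    have e2 : (insert (fun _ => w : Fin n → Fin m) ρ).erase (cst n m l)
        = insert (fun _ => w : Fin n → Fin m) (ρ.erase (cst n m l)) :=
      Finset.erase_insert_of_ne (fun h => hcw h.symm)
    have e3 : insert (cst n m l) (insert (fun _ => w : Fin n → Fin m) ρ)
        = insert (fun _ => w : Fin n → Fin m) (insert (cst n m l) ρ) :=
      Finset.insert_comm _ _ _
    have i1 := ih hl' ρ hP
    have i2 := ih hl' (ρ.erase (cst n m l)) (P4 ρ l hllt hP)
    have i3 := ih hl' (insert (cst n m l) ρ) (P3 ρ l hllt hP)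
    rw [aux_mem_sp_succ_iff, aux_mem_sp_succ_iff, e1, e2, e3, ← i1, ← i2, ← i3]

lemma aux_key (n m : ℕ) [NeZero m] (hn : 3 ≤ n) (σ : Finset (Fin n → Fin m))
    (i₀ : Fin n) (w u : Fin m) (hwu : w.val < u.val)
    (hσSp : σ ∈ Sp n m w.val)
    (hM : σ ∉ MSet n m w.val)
    (hwσ : (fun _ => w : Fin n → Fin m) ∉ σ)
    (gw gu : Fin n → Fin m) (hgwσ : gw ∈ σ) (hguσ : gu ∈ σ)
    (hgwi : gw i₀ = w) (hgui : gu i₀ = u)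
    (hgwc : ∀ c : Fin m, gw ≠ fun _ => c) (hguc : ∀ c : Fin m, gu ≠ fun _ => c)
    (hnu : ∀ g ∈ σ, ∀ i, i ≠ i₀ → g i ≠ u)
    (hnw : ∀ g ∈ σ, ∀ i, i ≠ i₀ → g i ≠ w) : False := by
  have hn1 : 1 ≤ n := by omega
  haveI : Nontrivial (Fin n) := Fin.nontrivial_iff_two_le.mpr (by omega)
  have hwune : w ≠ u := fun h => (Nat.ne_of_lt hwu) (congrArg Fin.val h)
  set cw : Fin n → Fin m := fun _ => w with hcwdef
  set P : Finset (Fin n → Fin m) → Prop := fun ρ =>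
    gw ∈ ρ ∧ gu ∈ ρ ∧ cw ∉ ρ ∧
      ∀ f ∈ ρ, f ∈ σ ∨ ∃ c : Fin m, c.val < w.val ∧ f = fun _ => c with hPdef
  have hcstconst : ∀ j : ℕ, cst n m j = fun _ => (Fin.ofNat m j) := fun _ => rfl
  have hcstne : ∀ j : ℕ, j < w.val → cst n m j ≠ cw := by
    intro j hj hEq
    have h1 : (Fin.ofNat m j) = w := congrFun hEq ⟨0, hn1⟩
    have h2 : (Fin.ofNat m j).val = w.val := congrArg Fin.val h1
    rw [Fin.val_ofNat, Nat.mod_eq_of_lt (lt_trans hj w.isLt)] at h2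
    omega
  have hP1 : ∀ ρ, P ρ → ρ.Nonempty := fun ρ hρ => ⟨gw, hρ.1⟩
  have hP3 : ∀ ρ (j : ℕ), j < w.val → P ρ → P (insert (cst n m j) ρ) := by
    intro ρ j hj hρ
    refine ⟨Finset.mem_insert_of_mem hρ.1, Finset.mem_insert_of_mem hρ.2.1, ?_, ?_⟩
    · intro hmem
      rcases Finset.mem_insert.mp hmem with hEq | hmem'
      · exact hcstne j hj hEq.symm
      · exact hρ.2.2.1 hmem'
    · intro f hf
      rcases Finset.mem_insert.mp hf with rfl | hf'
      · refine Or.inr ⟨(Fin.ofNat m j), ?_, rfl⟩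
        rw [Fin.val_ofNat, Nat.mod_eq_of_lt (lt_trans hj w.isLt)]
        exact hj
      · exact hρ.2.2.2 f hf'
  have hP4 : ∀ ρ (j : ℕ), j < w.val → P ρ → P (ρ.erase (cst n m j)) := by
    intro ρ j hj hρ
    refine ⟨Finset.mem_erase.mpr ⟨hgwc _, hρ.1⟩, Finset.mem_erase.mpr ⟨hguc _, hρ.2.1⟩,
      fun h => hρ.2.2.1 (Finset.mem_of_mem_erase h),
      fun f hf => hρ.2.2.2 f (Finset.mem_of_mem_erase hf)⟩
  have hP5 : ∀ ρ, P ρ → ρ ∈ Sp n m 0 → insert cw ρ ∈ Sp n m 0 := by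
    rintro ρ ⟨hgwρ, hguρ, hcwρ, hρσ⟩ ⟨hne, hGV, h, hhGV, hadj⟩
    refine ⟨Finset.insert_nonempty _ _, ?_, ?_⟩
    · intro f hf
      rcases Finset.mem_insert.mp hf with rfl | hf'
      · exact Or.inl ⟨w, fun _ => rfl⟩
      · exact hGV f hf'
    · have hwj : ∀ j, h j = w → j = i₀ := by
        intro j hj
        by_contra hji
        exact hadj gw hgwρ i₀ j (fun hEq => hji hEq.symm) (hgwi.trans hj.symm)
      have huj : ∀ j, h j = u → j = i₀ := by
        intro j hj
        by_contra hji
        exact hadj gu hguρ i₀ j (fun hEq => hji hEq.symm) (hgui.trans hj.symm)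
      by_cases hex : ∃ j, h j = w
      · obtain ⟨j₁, hj₁⟩ := hex
        have hj₁i : j₁ = i₀ := hwj _ hj₁
        subst hj₁i
        have hune : ∀ j, h j ≠ u := by
          intro j hj
          have hji : j = j₁ := huj j hj
          rw [hji, hj₁] at hj
          exact hwune hj
        have hinj : Function.Injective h := by
          rcases hhGV with ⟨v, hv⟩ | hinj
          · exfalso
            obtain ⟨i1, hi1⟩ := exists_ne j₁
            have : h i1 = w := by rw [hv i1, ← hv j₁, hj₁]
            exact hi1 (hwj i1 this)
          · exact hinj
        refine ⟨Function.update h j₁ u, Or.inr ?_, ?_⟩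
        · intro a b hab
          rcases eq_or_ne a j₁ with rfl | ha
          · rcases eq_or_ne b a with rfl | hb
            · rfl
            · exfalso
              rw [Function.update_self, Function.update_of_ne hb] at hab
              exact hune b hab.symm
          · rcases eq_or_ne b j₁ with rfl | hb
            · exfalso
              rw [Function.update_self, Function.update_of_ne ha] at hab
              exact hune a hab
            · rw [Function.update_of_ne ha, Function.update_of_ne hb] at hab
              exact hinj hab
        · intro f hf i j hij
          rcases Finset.mem_insert.mp hf with rfl | hfρ
          · rcases eq_or_ne j j₁ with rfl | hj
            · rw [Function.update_self]
              exact fun hEq => hwune hEq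
            · rw [Function.update_of_ne hj]
              intro hEq
              exact hj (hwj j hEq.symm)
          · rcases eq_or_ne j j₁ with rfl | hj
            · rw [Function.update_self]
              have hiz : i ≠ j := hij
              rcases hρσ f hfρ with hfσ | ⟨c, hc, rfl⟩
              · exact hnu f hfσ i hiz
              · intro hEq
                have : c.val = u.val := congrArg Fin.val hEq
                omega
            · rw [Function.update_of_ne hj]
              exact hadj f hfρ i j hij
      · push_neg at hex
        refine ⟨h, hhGV, ?_⟩
        intro f hf i j hij
        rcases Finset.mem_insert.mp hf with rfl | hfρ
        · exact fun hEq => hex j hEq.symm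
        · exact hadj f hfρ i j hij
  have htog := aux_toggle n m hn1 w P hP1 hP3 hP4 hP5 w.val le_rfl σ
    ⟨hgwσ, hguσ, hwσ, fun f hf => Or.inl hf⟩
  have hins : insert cw σ ∈ Sp n m w.val := htog.mp hσSp
  apply hM
  have hcsteq : cst n m w.val = cw := by
    funext i
    show (Fin.ofNat m w.val) = w
    exact Fin.ext (by rw [Fin.val_ofNat, Nat.mod_eq_of_lt w.isLt])
  exact ⟨hσSp, by rw [hcsteq]; exact hwσ, by rw [hcsteq]; exact hins⟩

/-- Let `σ ⊆ N(z₁⋯zₙ)` be a critical cell (with `z_k = 1`).  If `X_σ = [m]`,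
then `A_i^σ = {z_i}` for every `i`, and hence `σ ∪ {⟨z_i⟩}` is not a simplex of
`𝒩(G)` for any `i`.  (Colors `1,…,m` are `0,…,m-1`.) -/
theorem Ai_of_critical_with_full_Xall (n m : ℕ) [NeZero m]
    (hn : 3 ≤ n) (hnm : n < m)
    (z : Fin n → Fin m) (hz : Function.Injective z) (k : Fin n) (hk : z k = 0)
    (σ : Finset (Fin n → Fin m)) (hσz : ∀ f ∈ σ, ExpAdj n m f z)
    (hcrit : Critical n m σ)
    (hfull : Xall n m σ = Finset.univ) :
    (∀ i : Fin n, Ai n m σ i = {z i}) ∧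
    (∀ i : Fin n, insert (fun _ => z i : Fin n → Fin m) σ ∉ Sp n m 0) := by
  haveI : Nontrivial (Fin n) := Fin.nontrivial_iff_two_le.mpr (by omega)
  have hσ0 : σ ∈ Sp n m 0 := hcrit.1
  have hzcoord : ∀ (j : Fin n) (f : Fin n → Fin m) (i : Fin n), f ∈ σ → f i = z j → i = j := by
    intro j f i hf hfi
    by_contra hij
    exact hσz f hf i j hij hfi
  have hconstz : ∀ j : Fin n, (fun _ => z j : Fin n → Fin m) ∉ σ := by
    intro j hmem
    obtain ⟨i1, hi1⟩ := exists_ne j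
    exact hσz _ hmem i1 j hi1 rfl
  have hzwit : ∀ j : Fin n, ∃ f ∈ σ, f j = z j ∧ ∀ c : Fin m, f ≠ fun _ => c := by
    intro j
    have hzmem : z j ∈ Xall n m σ := by rw [hfull]; exact Finset.mem_univ _
    obtain ⟨i, -, hx⟩ := Finset.mem_biUnion.mp hzmem
    obtain ⟨f, hfσ, hfi⟩ := Finset.mem_image.mp hx
    obtain rfl : i = j := hzcoord j f i hfσ hfi
    refine ⟨f, hfσ, hfi, ?_⟩
    rintro c rfl
    have : c = z i := hfi
    subst this
    exact hconstz i hfσ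
  have hnobad : ∀ (i₀ : Fin n) (x : Fin m), x ∈ Xi n m σ i₀ →
      (∀ j, j ≠ i₀ → x ∉ Xi n m σ j) → x ∉ Set.range z →
      (fun _ => x : Fin n → Fin m) ∉ σ → False := by
    intro i₀ x hxX hxonly hxz hxσ
    obtain ⟨gx, hgxσ, hgxi⟩ := Finset.mem_image.mp hxX
    have hgxc : ∀ c : Fin m, gx ≠ fun _ => c := by
      rintro c rfl
      have : c = x := hgxi
      subst this
      exact hxσ hgxσ
    obtain ⟨gz, hgzσ, hgzi, hgzc⟩ := hzwit i₀
    have hnx : ∀ g ∈ σ, ∀ i, i ≠ i₀ → g i ≠ x := by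
      intro g hg i hi hgi
      exact hxonly i hi (Finset.mem_image.mpr ⟨g, hg, hgi⟩)
    have hnz : ∀ g ∈ σ, ∀ i, i ≠ i₀ → g i ≠ z i₀ := by
      intro g hg i hi hgi
      exact hσz g hg i i₀ hi hgi
    have hxne : x.val ≠ (z i₀).val := by
      intro hEq
      exact hxz ⟨i₀, Fin.ext hEq.symm⟩
    have hσSp := aux_crit_sp n m σ hcrit
    rcases Nat.lt_or_ge x.val (z i₀).val with hlt | hge
    · exact aux_key n m hn σ i₀ x (z i₀) hlt
        (hσSp x.val (le_of_lt x.isLt)) ((hcrit.2 x.val x.isLt).1) hxσ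
        gx gz hgxσ hgzσ hgxi hgzi hgxc hgzc hnz hnx
    · have hgt : (z i₀).val < x.val := lt_of_le_of_ne hge (Ne.symm hxne)
      exact aux_key n m hn σ i₀ (z i₀) x hgt
        (hσSp (z i₀).val (le_of_lt (z i₀).isLt)) ((hcrit.2 (z i₀).val (z i₀).isLt).1)
        (hconstz i₀)
        gz gx hgzσ hgxσ hgzi hgxi hgzc hgxc hnx hnz
  have part1 : ∀ i : Fin n, Ai n m σ i = {z i} := by
    intro i
    ext y
    simp only [Ai, Finset.mem_sdiff, Finset.mem_univ, true_and, Finset.mem_biUnion,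
      Finset.mem_erase, Finset.mem_singleton, not_exists, not_and]
    constructor
    · intro hy
      by_contra hyne
      have hyX : ∃ j, y ∈ Xi n m σ j := by
        have : y ∈ Xall n m σ := by rw [hfull]; exact Finset.mem_univ _
        obtain ⟨j, -, hj⟩ := Finset.mem_biUnion.mp this
        exact ⟨j, hj⟩
      obtain ⟨j, hj⟩ := hyX
      have hji : j = i := by
        by_contra hji
        exact hy j ⟨hji, trivial⟩ hj
      subst hji
      have hyz : y ∉ Set.range z := by
        rintro ⟨j', rfl⟩
        obtain ⟨f, hfσ, hfi⟩ := Finset.mem_image.mp hj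
        have : j = j' := hzcoord j' f j hfσ hfi
        exact hyne (by rw [this])
      have hyσ : (fun _ => y : Fin n → Fin m) ∉ σ := by
        intro hmem
        obtain ⟨j1, hj1⟩ := exists_ne j
        exact hy j1 ⟨hj1, trivial⟩ (Finset.mem_image.mpr ⟨_, hmem, rfl⟩)
      exact hnobad j y hj (fun j' hj' hmem => hy j' ⟨hj', trivial⟩ hmem) hyz hyσ
    · rintro rfl j hj hmem
      obtain ⟨f, hfσ, hfi⟩ := Finset.mem_image.mp hmem
      exact hj.1 (hzcoord i f j hfσ hfi)
  refine ⟨part1, ?_⟩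
  intro i hmem
  obtain ⟨-, -, h, -, hadj⟩ := hmem
  have hh : ∀ b : Fin n, h b = z b := by
    intro b
    have hAb : h b ∈ Ai n m σ b := by
      simp only [Ai, Finset.mem_sdiff, Finset.mem_univ, true_and, Finset.mem_biUnion,
        Finset.mem_erase, not_exists, not_and]
      rintro j ⟨hjb, -⟩ hmem'
      obtain ⟨f, hfσ, hfi⟩ := Finset.mem_image.mp hmem'
      exact hadj f (Finset.mem_insert_of_mem hfσ) j b hjb hfi
    rw [part1 b] at hAb
    exact Finset.mem_singleton.mp hAb
  obtain ⟨i1, hi1⟩ := exists_ne i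
  exact hadj (fun _ => z i) (Finset.mem_insert_self _ _) i1 i hi1 (by rw [hh i])
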